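/- Let G = (V,E) be a finite connected simple graph with at least two vertices, with diameter δ(G) and volume V(G) = Σ_{v ∈ V} d(v). Then the smallest nonzero eigenvalue λ₁ (the spectral gap) of the random-walk normalized Laplacian Δ = I − D⁻¹A satisfies λ₁ ≥ 1/(δ(G)·V(G)). -/

import Mathlib

open Matrix Finset

namespace SpectralGapAux

variable {V : Type*} [Fintype V] [DecidableEq V] (G : SimpleGraph V) [DecidableRel G.Adj]

lemma sum_dart_eq (F : V → V → ℝ) :
    ∑ d : G.Dart, F d.fst d.snd = ∑ v, ∑ u ∈ G.neighborFinset v, F v u := by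
  let e : (Σ v : V, G.neighborSet v) ≃ G.Dart :=
    { toFun := fun s => ⟨(s.fst, s.snd), s.snd.property⟩
      invFun := fun d => ⟨d.fst, d.snd, d.adj⟩
      left_inv := fun s => by ext <;> simp
      right_inv := fun d => by ext <;> simp }
  rw [← Fintype.sum_equiv e (fun s => F s.fst s.snd.val) (fun d => F d.fst d.snd)
      (fun s => rfl)]
  rw [← Finset.univ_sigma_univ, Finset.sum_sigma]
  refine Finset.sum_congr rfl fun v _ => ?_
  rw [SimpleGraph.neighborFinset_def]
  exact Finset.sum_set_coe (f := fun u => F v u) (G.neighborSet v)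

lemma nbr_sum_swap (g : V → ℝ) :
    ∑ v, ∑ u ∈ G.neighborFinset v, g u = ∑ u, (G.degree u : ℝ) * g u := by
  simp_rw [SimpleGraph.neighborFinset_eq_filter, Finset.sum_filter]
  rw [Finset.sum_comm]
  refine Finset.sum_congr rfl fun u _ => ?_
  simp_rw [G.adj_comm _ u]
  rw [← Finset.sum_filter, Finset.sum_const, ← SimpleGraph.neighborFinset_eq_filter,
    SimpleGraph.card_neighborFinset_eq_degree, nsmul_eq_mul]

lemma list_sq_sum_le (l : List ℝ) : l.sum ^ 2 ≤ l.length * (l.map (· ^ 2)).sum := by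
  induction l with
  | nil => simp
  | cons a l ih =>
    simp only [List.sum_cons, List.length_cons, List.map_cons, Nat.cast_add, Nat.cast_one]
    set s := l.sum
    set t := (l.map (· ^ 2)).sum
    set n := (l.length : ℝ)
    have hn : 0 ≤ n := Nat.cast_nonneg _
    have ht : 0 ≤ t := by
      have : ∀ x ∈ l.map (· ^ 2), 0 ≤ x := by
        intro x hx
        simp only [List.mem_map] at hx
        obtain ⟨y, _, rfl⟩ := hx
        positivity
      exact List.sum_nonneg this
    rcases eq_or_lt_of_le hn with h0 | hpos
    · have hs2 : s ^ 2 = 0 := le_antisymm (by rw [← h0] at ih; linarith) (sq_nonneg s)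
      have hs : s = 0 := by
        have := sq_eq_zero_iff.mp hs2
        simpa using this
      rw [hs, ← h0]
      simp only [add_zero, zero_add, one_mul]
      linarith
    · nlinarith [sq_nonneg (n * a - s), ih, ht]

lemma walk_telescope (f : V → ℝ) {a b : V} (p : G.Walk a b) :
    (p.darts.map (fun d => f d.fst - f d.snd)).sum = f a - f b := by
  induction p with
  | nil => simp
  | cons h p ih => simp [SimpleGraph.Walk.darts_cons, ih]

end SpectralGapAux

/-- The random-walk normalized Laplacian `Δ = I - D⁻¹ A` of a finite simple graph `G`
(over a field `R`), defined whenever every vertex has positive degree. -/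
def SimpleGraph.normLapMatrix {V : Type*} [Fintype V] [DecidableEq V]
    (G : SimpleGraph V) [DecidableRel G.Adj] (R : Type*) [Field R] : Matrix V V R :=
  1 - Matrix.diagonal (fun v => ((G.degree v : R))⁻¹) * G.adjMatrix R

/-- For a finite connected simple graph `G` with at least two vertices, with diameter
`δ(G)` and volume `V(G) = ∑_v d(v)`, every nonzero eigenvalue of the random-walk
normalized Laplacian `Δ = I - D⁻¹A` — in particular the spectral gap `λ₁`, the smallest
such — satisfies `λ ≥ 1/(δ(G)·V(G))`. -/
theorem spectral_gap_ge_inv_diam_mul_volume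
    {V : Type*} [Fintype V] [DecidableEq V] (G : SimpleGraph V) [DecidableRel G.Adj]
    (hconn : G.Connected) (hcard : 2 ≤ Fintype.card V)
    (μ : ℝ) (hμ : Module.End.HasEigenvalue (Matrix.toLin' (G.normLapMatrix ℝ)) μ)
    (hμ0 : μ ≠ 0) :
    1 / ((G.diam : ℝ) * (∑ v, (G.degree v : ℝ))) ≤ μ := by
  classical
  have hV : Nonempty V := Fintype.card_pos_iff.mp (by omega)
  -- every vertex has positive degree
  have hdeg : ∀ v, 0 < G.degree v := by
    intro v
    rw [SimpleGraph.degree_pos_iff_exists_adj]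
    obtain ⟨w, hw⟩ := Fintype.exists_ne_of_one_lt_card (by omega) v
    obtain ⟨p⟩ := hconn v w
    cases p with
    | nil => exact (hw rfl).elim
    | cons h q => exact ⟨_, h⟩
  have hdegR : ∀ v, (0 : ℝ) < (G.degree v : ℝ) := fun v => by exact_mod_cast hdeg v
  -- eigenvector
  obtain ⟨f, hf⟩ := hμ.exists_hasEigenvector
  have hf0 : f ≠ 0 := hf.right
  have heq : ∀ v, f v - (G.degree v : ℝ)⁻¹ * ∑ u ∈ G.neighborFinset v, f u = μ * f v := by
    intro v
    have h := congrFun hf.apply_eq_smul v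
    rw [Matrix.toLin'_apply] at h
    unfold SimpleGraph.normLapMatrix at h
    rw [Matrix.sub_mulVec, Matrix.one_mulVec] at h
    rw [Pi.sub_apply, ← Matrix.mulVec_mulVec] at h
    rw [Matrix.mulVec_diagonal, SimpleGraph.adjMatrix_mulVec_apply] at h
    exact h
  -- the key pointwise identity, multiplied through by the degree
  have key : ∀ v, (G.degree v : ℝ) * f v - ∑ u ∈ G.neighborFinset v, f u
      = μ * ((G.degree v : ℝ) * f v) := by
    intro v
    have h := heq v
    have hd0 : (G.degree v : ℝ) ≠ 0 := (hdegR v).ne'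
    have h2 : (G.degree v : ℝ) * (f v - (G.degree v : ℝ)⁻¹ * ∑ u ∈ G.neighborFinset v, f u)
        = (G.degree v : ℝ) * (μ * f v) := by rw [h]
    rw [mul_sub, mul_inv_cancel_left₀ hd0] at h2
    rw [h2]; ring
  -- sum of d v * f v is zero
  have hsum : ∑ v, (G.degree v : ℝ) * f v = 0 := by
    have h1 : ∑ v, ((G.degree v : ℝ) * f v - ∑ u ∈ G.neighborFinset v, f u)
        = ∑ v, μ * ((G.degree v : ℝ) * f v) := Finset.sum_congr rfl fun v _ => key v
    rw [Finset.sum_sub_distrib, SpectralGapAux.nbr_sum_swap G f, ← Finset.mul_sum] at h1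
    have h2 : (0 : ℝ) = μ * ∑ v, (G.degree v : ℝ) * f v := by
      rw [← h1]; ring
    rcases mul_eq_zero.mp h2.symm with h | h
    · exact absurd h hμ0
    · exact h
  set A := ∑ v, (G.degree v : ℝ) * f v ^ 2 with hA
  -- quadratic form identity
  have hquad : ∑ v, ∑ u ∈ G.neighborFinset v, (f v - f u) ^ 2 = 2 * (μ * A) := by
    have h2 : ∑ v, f v * ((G.degree v : ℝ) * f v - ∑ u ∈ G.neighborFinset v, f u)
        = μ * A := by
      rw [hA, Finset.mul_sum]
      refine Finset.sum_congr rfl fun v _ => ?_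
      rw [key v]; ring
    have hB : ∑ v, f v * ((G.degree v : ℝ) * f v - ∑ u ∈ G.neighborFinset v, f u)
        = A - ∑ v, ∑ u ∈ G.neighborFinset v, f v * f u := by
      rw [hA, ← Finset.sum_sub_distrib]
      refine Finset.sum_congr rfl fun v _ => ?_
      rw [mul_sub, Finset.mul_sum]; ring_nf
    have hAB : A - ∑ v, ∑ u ∈ G.neighborFinset v, f v * f u = μ * A := by
      rw [← hB, h2]
    have hexp : ∑ v, ∑ u ∈ G.neighborFinset v, (f v - f u) ^ 2
        = 2 * A - 2 * ∑ v, ∑ u ∈ G.neighborFinset v, f v * f u := by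
      have e1 : ∀ v ∈ (univ : Finset V), ∑ u ∈ G.neighborFinset v, (f v - f u) ^ 2
          = (G.degree v : ℝ) * f v ^ 2 + (∑ u ∈ G.neighborFinset v, f u ^ 2
            - 2 * ∑ u ∈ G.neighborFinset v, f v * f u) := by
        intro v _
        have e0 : ∀ u ∈ G.neighborFinset v, (f v - f u) ^ 2
            = f v ^ 2 + (f u ^ 2 - 2 * (f v * f u)) := fun u _ => by ring
        rw [Finset.sum_congr rfl e0, Finset.sum_add_distrib, Finset.sum_const,
          SimpleGraph.card_neighborFinset_eq_degree, nsmul_eq_mul,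
          Finset.sum_sub_distrib, ← Finset.mul_sum]
      rw [Finset.sum_congr rfl e1, Finset.sum_add_distrib, Finset.sum_sub_distrib,
        SpectralGapAux.nbr_sum_swap G (fun u => f u ^ 2), ← Finset.mul_sum, ← hA]
      ring
    rw [hexp]; linarith [hAB]
  -- A is positive
  have hApos : 0 < A := by
    obtain ⟨v0, hv0⟩ : ∃ v, f v ≠ 0 := by
      by_contra hcon
      push_neg at hcon
      exact hf0 (funext fun v => hcon v)
    refine Finset.sum_pos' (fun v _ => by positivity) ⟨v0, Finset.mem_univ v0, ?_⟩
    have : 0 < f v0 ^ 2 := by positivity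
    exact mul_pos (hdegR v0) this
  -- μ is positive
  have hμpos : 0 < μ := by
    have hQ0 : 0 ≤ ∑ v, ∑ u ∈ G.neighborFinset v, (f v - f u) ^ 2 :=
      Finset.sum_nonneg fun v _ => Finset.sum_nonneg fun u _ => sq_nonneg _
    rw [hquad] at hQ0
    rcases lt_or_eq_of_le (nonneg_of_mul_nonneg_right (by linarith) hApos) with h | h
    · exact h
    · exact absurd h.symm hμ0
  -- choose a vertex maximizing f^2
  obtain ⟨u₀, -, hmax⟩ := Finset.exists_max_image (univ : Finset V) (fun v => f v ^ 2)
    ⟨Classical.arbitrary V, Finset.mem_univ _⟩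
  have hmax' : ∀ v, f v ^ 2 ≤ f u₀ ^ 2 := fun v => hmax v (Finset.mem_univ v)
  have hfu0 : f u₀ ≠ 0 := by
    intro h0
    obtain ⟨v0, hv0⟩ : ∃ v, f v ≠ 0 := by
      by_contra hcon
      push_neg at hcon
      exact hf0 (funext fun v => hcon v)
    have h1 := hmax' v0
    rw [h0] at h1
    simp only [ne_eq, zero_pow, OfNat.ofNat_ne_zero, not_false_eq_true] at h1
    exact hv0 (pow_eq_zero_iff two_ne_zero |>.mp (le_antisymm h1 (sq_nonneg _)))
  -- choose a vertex where f has the opposite sign (or is zero)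
  obtain ⟨v₀, hv₀⟩ : ∃ v, f u₀ * f v ≤ 0 := by
    by_contra hcon
    push_neg at hcon
    have hpos : 0 < ∑ v, (G.degree v : ℝ) * (f u₀ * f v) :=
      Finset.sum_pos (fun v _ => mul_pos (hdegR v) (hcon v)) ⟨Classical.arbitrary V,
        Finset.mem_univ _⟩
    have : ∑ v, (G.degree v : ℝ) * (f u₀ * f v) = f u₀ * ∑ v, (G.degree v : ℝ) * f v := by
      rw [Finset.mul_sum]
      exact Finset.sum_congr rfl fun v _ => by ring
    rw [this, hsum, mul_zero] at hpos
    exact lt_irrefl 0 hpos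
  -- a shortest path from u₀ to v₀
  obtain ⟨q, hq⟩ := hconn.exists_walk_length_eq_dist u₀ v₀
  set p := q.bypass with hp_def
  have hp : p.IsPath := q.bypass_isPath
  have hediam : G.ediam ≠ ⊤ := by
    obtain ⟨a, b, hab⟩ := SimpleGraph.exists_edist_eq_ediam_of_finite (G := G)
    rw [← hab]
    exact (SimpleGraph.edist_ne_top_iff_reachable).mpr (hconn a b)
  have hlen : p.length ≤ G.diam := le_trans (hq ▸ q.length_bypass_le)
    (SimpleGraph.dist_le_diam hediam)
  -- telescoping and Cauchy–Schwarz along the path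
  set T := (p.darts.map (fun d => (f d.fst - f d.snd) ^ 2)).sum with hT_def
  have hT0 : 0 ≤ T := by
    refine List.sum_nonneg fun x hx => ?_
    simp only [List.mem_map] at hx
    obtain ⟨d, -, rfl⟩ := hx
    positivity
  have hCS : (f u₀ - f v₀) ^ 2 ≤ (p.length : ℝ) * T := by
    have h1 := SpectralGapAux.list_sq_sum_le (p.darts.map (fun d => f d.fst - f d.snd))
    rw [SpectralGapAux.walk_telescope G f p] at h1
    rw [List.length_map, SimpleGraph.Walk.length_darts, List.map_map] at h1
    have : ((fun x => x ^ 2) ∘ fun d => f d.fst - f d.snd)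
        = fun d : G.Dart => (f d.fst - f d.snd) ^ 2 := rfl
    rw [this] at h1
    exact h1
  -- the path edge-sum is at most half the full quadratic form
  have hdartsnd : p.darts.Nodup := by
    have := hp.isTrail.edges_nodup
    exact List.Nodup.of_map SimpleGraph.Dart.edge this
  have hTQ : 2 * T ≤ ∑ v, ∑ u ∈ G.neighborFinset v, (f v - f u) ^ 2 := by
    rw [← SpectralGapAux.sum_dart_eq G (fun a b => (f a - f b) ^ 2)]
    set P := p.darts.toFinset with hP_def
    have hTP : T = ∑ d ∈ P, (f d.fst - f d.snd) ^ 2 := by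
      rw [hP_def, List.sum_toFinset _ hdartsnd]
    set P' := P.image SimpleGraph.Dart.symm with hP'_def
    have hPP' : ∑ d ∈ P', (f d.fst - f d.snd) ^ 2 = ∑ d ∈ P, (f d.fst - f d.snd) ^ 2 := by
      rw [hP'_def, Finset.sum_image (fun a _ b _ h =>
        SimpleGraph.Dart.symm_involutive.injective h)]
      refine Finset.sum_congr rfl fun d _ => ?_
      simp only [SimpleGraph.Dart.symm_toProd, Prod.fst_swap, Prod.snd_swap]
      ring
    have hdisj : Disjoint P P' := by
      rw [Finset.disjoint_left]
      intro d hd hd'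
      rw [hP'_def, Finset.mem_image] at hd'
      obtain ⟨e, he, hde⟩ := hd'
      rw [hP_def, List.mem_toFinset] at hd he
      have hedge : d.edge = e.edge := by rw [← hde, SimpleGraph.Dart.edge_symm]
      have hinj := List.inj_on_of_nodup_map (f := SimpleGraph.Dart.edge)
        hp.isTrail.edges_nodup hd he hedge
      rw [hinj] at hde
      exact SimpleGraph.Dart.symm_ne e hde
    calc 2 * T = ∑ d ∈ P, (f d.fst - f d.snd) ^ 2 + ∑ d ∈ P', (f d.fst - f d.snd) ^ 2 := by
          rw [hTP, hPP']; ring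
      _ = ∑ d ∈ P ∪ P', (f d.fst - f d.snd) ^ 2 := (Finset.sum_union hdisj).symm
      _ ≤ ∑ d : G.Dart, (f d.fst - f d.snd) ^ 2 := by
          refine Finset.sum_le_sum_of_subset_of_nonneg (Finset.subset_univ _)
            fun d _ _ => by positivity
  -- put everything together
  have hTμA : T ≤ μ * A := by
    rw [hquad] at hTQ
    linarith
  have hAvol : A ≤ (∑ v, (G.degree v : ℝ)) * f u₀ ^ 2 := by
    rw [Finset.sum_mul]
    exact Finset.sum_le_sum fun v _ =>
      mul_le_mul_of_nonneg_left (hmax' v) (hdegR v).le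
  have hfu0sq : 0 < f u₀ ^ 2 := by positivity
  have hstep1 : f u₀ ^ 2 ≤ (f u₀ - f v₀) ^ 2 := by nlinarith [sq_nonneg (f v₀)]
  have hdiam0 : G.diam ≠ 0 := by
    intro h
    rcases SimpleGraph.diam_eq_zero.mp h with h' | h'
    · exact hediam h'
    · have : Fintype.card V ≤ 1 := Fintype.card_le_one_iff_subsingleton.mpr h'
      omega
  have hdiamR : (0 : ℝ) < (G.diam : ℝ) := by
    exact_mod_cast Nat.pos_of_ne_zero hdiam0
  have hvolR : (0 : ℝ) < ∑ v, (G.degree v : ℝ) :=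
    Finset.sum_pos (fun v _ => hdegR v) ⟨Classical.arbitrary V, Finset.mem_univ _⟩
  have hchain : f u₀ ^ 2 ≤ (G.diam : ℝ) * (μ * ((∑ v, (G.degree v : ℝ)) * f u₀ ^ 2)) := by
    have h1 : (p.length : ℝ) * T ≤ (G.diam : ℝ) * T := by
      have : (p.length : ℝ) ≤ (G.diam : ℝ) := by exact_mod_cast hlen
      exact mul_le_mul_of_nonneg_right this hT0
    have h2 : (G.diam : ℝ) * T ≤ (G.diam : ℝ) * (μ * A) :=
      mul_le_mul_of_nonneg_left hTμA hdiamR.le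
    have h3 : (G.diam : ℝ) * (μ * A) ≤ (G.diam : ℝ) * (μ * ((∑ v, (G.degree v : ℝ)) * f u₀ ^ 2)) := by
      refine mul_le_mul_of_nonneg_left ?_ hdiamR.le
      exact mul_le_mul_of_nonneg_left hAvol hμpos.le
    linarith [hstep1, hCS]
  rw [div_le_iff₀ (by positivity)]
  have := (mul_le_mul_iff_left₀ hfu0sq).mp (by linarith [hchain] : 1 * f u₀ ^ 2 ≤
    ((G.diam : ℝ) * (μ * (∑ v, (G.degree v : ℝ)))) * f u₀ ^ 2)
  linarith [this]
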